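/- Let ω, ω' ∈ 𝕊² (the unit sphere of ℝ³) with −1 < ω·ω' < 1, and define the unit tangent vectors e := (ω' − (ω·ω')ω)/√(1 − (ω·ω')²) and e' := (ω − (ω·ω')ω')/√(1 − (ω·ω')²). Then e + e' = ((1 − ω·ω')/√(1 − (ω·ω')²)) (ω + ω'), and consequently |e + e'| = |ω − ω'|. -/

import Mathlib

open MeasureTheory

noncomputable section

abbrev E3 : Type := EuclideanSpace ℝ (Fin 3)

/-- the exact cancellation `e + e' = ((1 − ω·ω')/√(1 − (ω·ω')²)) (ω + ω')`, and
hence `|e + e'| = |ω − ω'|`, for the unit tangent vectors `e`, `e'` associated to two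
directions `ω, ω'` on the unit sphere. -/
theorem stmt16 (ω ω' : E3) (hω : ‖ω‖ = 1) (hω' : ‖ω'‖ = 1)
    (h₁ : -1 < (inner ℝ ω ω' : ℝ)) (h₂ : (inner ℝ ω ω' : ℝ) < 1)
    (e e' : E3)
    (he : e = (Real.sqrt (1 - (inner ℝ ω ω' : ℝ) ^ 2))⁻¹ • (ω' - (inner ℝ ω ω' : ℝ) • ω))
    (he' : e' = (Real.sqrt (1 - (inner ℝ ω ω' : ℝ) ^ 2))⁻¹ • (ω - (inner ℝ ω ω' : ℝ) • ω')) :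
    e + e' = ((1 - (inner ℝ ω ω' : ℝ)) / Real.sqrt (1 - (inner ℝ ω ω' : ℝ) ^ 2)) • (ω + ω') ∧
      ‖e + e'‖ = ‖ω - ω'‖ := by
  set c : ℝ := (inner ℝ ω ω' : ℝ) with hc
  have hc2 : c ^ 2 < 1 := by
    have := abs_lt.mpr ⟨h₁, h₂⟩
    calc c ^ 2 = |c| ^ 2 := (sq_abs c).symm
    _ < 1 := by nlinarith [abs_nonneg c]
  have hspos : 0 < Real.sqrt (1 - c ^ 2) := Real.sqrt_pos.mpr (by linarith)
  have hs2 : Real.sqrt (1 - c ^ 2) ^ 2 = 1 - c ^ 2 := Real.sq_sqrt (by linarith)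
  have key : e + e' = ((1 - c) / Real.sqrt (1 - c ^ 2)) • (ω + ω') := by
    rw [he, he', div_eq_mul_inv]
    module
  refine ⟨key, ?_⟩
  rw [key]
  have h1 : ‖ω + ω'‖ ^ 2 = 2 + 2 * c := by
    rw [norm_add_sq_real, hω, hω', ← hc]; ring
  have h2 : ‖ω - ω'‖ ^ 2 = 2 - 2 * c := by
    rw [norm_sub_sq_real, hω, hω', ← hc]; ring
  rw [norm_smul]
  have hnn : 0 ≤ (1 - c) / Real.sqrt (1 - c ^ 2) := div_nonneg (by linarith) hspos.le
  rw [Real.norm_eq_abs, abs_of_nonneg hnn]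
  have hsq : ((1 - c) / Real.sqrt (1 - c ^ 2) * ‖ω + ω'‖) ^ 2 = ‖ω - ω'‖ ^ 2 := by
    rw [mul_pow, div_pow, hs2, h1, h2, div_mul_eq_mul_div,
      div_eq_iff (by nlinarith : (1:ℝ) - c ^ 2 ≠ 0)]
    ring
  calc (1 - c) / Real.sqrt (1 - c ^ 2) * ‖ω + ω'‖
      = Real.sqrt (((1 - c) / Real.sqrt (1 - c ^ 2) * ‖ω + ω'‖) ^ 2) :=
        (Real.sqrt_sq (by positivity)).symm
    _ = Real.sqrt (‖ω - ω'‖ ^ 2) := by rw [hsq]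
    _ = ‖ω - ω'‖ := Real.sqrt_sq (norm_nonneg _)
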